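/- arXiv:cs/0509052 — 3 statements merged into one kernel-verified Lean document; each statement's English description precedes it below -/
import Mathlib

section
/- Sufficient viability condition: if φ₀ = 0 and N·k̄·ρ·Σ_s g(s)h(s) > 1, then the net influx r(n) = N·P(n) - n, where P(n) = Σ_s h(s)(1 - exp(-ρ·n·k̄·g(s))), satisfies r(0) = 0 and r'(0) > 0; hence the empty club (n = 0) is an unstable equilibrium. -/
/-- Sufficient viability condition: if φ₀ = 0 and N·k̄·ρ·Σ_s g(s)h(s) > 1, then the net influx
r(n) = N·P(n) - n satisfies r(0) = 0 and r'(0) > 0, so the empty club is unstable. -/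
theorem stmt_6 (S : Type*) [Fintype S]
    (g h : S → ℝ) (hg0 : ∀ s, 0 ≤ g s) (hh0 : ∀ s, 0 ≤ h s)
    (hg1 : ∑ s, g s = 1) (hh1 : ∑ s, h s = 1)
    (N k ρ : ℝ) (hN : 0 < N) (hk : 0 < k) (hρ : 0 < ρ)
    (hviab : 1 < N * k * ρ * ∑ s, g s * h s)
    (r : ℝ → ℝ)
    (hr : r = fun n => N * (∑ s, h s * (1 - Real.exp (-(ρ * (n * k) * g s)))) - n) :
    r 0 = 0 ∧ 0 < deriv r 0 := by
  have hd : HasDerivAt r (N * (∑ s, h s * (ρ * k * g s)) - 1) 0 := by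
    rw [hr]
    have hsum : HasDerivAt (fun n => ∑ s, h s * (1 - Real.exp (-(ρ * (n * k) * g s))))
        (∑ s, h s * (ρ * k * g s)) 0 := by
      apply HasDerivAt.fun_sum
      intro s _
      have h1 : HasDerivAt (fun n : ℝ => -(ρ * (n * k) * g s)) (-(ρ * k * g s)) 0 := by
        have : HasDerivAt (fun n : ℝ => n * (-(ρ * k * g s))) (-(ρ * k * g s)) 0 := by
          simpa using (hasDerivAt_id (0:ℝ)).mul_const (-(ρ * k * g s))
        convert this using 2 with n
        ring
      have h2 := (Real.hasDerivAt_exp (-(ρ * (0 * k) * g s))).comp 0 h1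
      have h3 : HasDerivAt (fun n : ℝ => 1 - Real.exp (-(ρ * (n * k) * g s)))
          (ρ * k * g s) 0 := by
        have := (hasDerivAt_const (0:ℝ) (1:ℝ)).fun_sub h2
        simpa using this
      simpa using h3.const_mul (h s)
    simpa using (hsum.const_mul N).fun_sub (hasDerivAt_id (0:ℝ))
  constructor
  · simp [hr]
  · rw [hd.deriv]
    have : N * (∑ s, h s * (ρ * k * g s)) = N * k * ρ * ∑ s, g s * h s := by
      rw [Finset.mul_sum, Finset.mul_sum]
      congr 1; ext s; ring
    rw [this]; linarith
end

section
/- Uniqueness of the positive equilibrium: if P : [0,∞) → [0,1) is strictly concave and increasing with P(0) = 0 and N·P'(0) > 1, then the equation N·P(n) = n has exactly one solution n* > 0. -/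
/-- Uniqueness of the positive equilibrium: if P : [0,∞) → [0,1) is strictly concave,
strictly increasing, differentiable, with P(0) = 0 and N·P'(0) > 1, then
N·P(n) = n has exactly one solution n* > 0. -/
theorem stmt_9 (N : ℝ) (hN : 0 < N) (P : ℝ → ℝ)
    (hrange : ∀ n, 0 ≤ n → 0 ≤ P n ∧ P n < 1)
    (hconc : StrictConcaveOn ℝ (Set.Ici 0) P)
    (hmono : StrictMonoOn P (Set.Ici 0))
    (hdiff : Differentiable ℝ P)
    (hP0 : P 0 = 0)
    (hslope : 1 < N * deriv P 0) :
    ∃! n : ℝ, 0 < n ∧ N * P n = n := by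
  -- Key claim: there is x0 > 0 with N * P x0 > x0.
  have hderiv : HasDerivAt P (deriv P 0) 0 := (hdiff 0).hasDerivAt
  have hslopelim := hasDerivAt_iff_tendsto_slope.mp hderiv
  have hev : ∀ᶠ x in nhdsWithin 0 {x : ℝ | x ≠ 0}, 1 < N * slope P 0 x := by
    have : Filter.Tendsto (fun x => N * slope P 0 x) (nhdsWithin 0 {x : ℝ | x ≠ 0})
        (nhds (N * deriv P 0)) := (hslopelim.const_mul N)
    exact this.eventually (eventually_gt_nhds hslope)
  have hev' : ∀ᶠ x in nhdsWithin (0:ℝ) (Set.Ioi 0), 1 < N * slope P 0 x :=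
    hev.filter_mono (nhdsWithin_mono 0 (fun x hx => ne_of_gt hx))
  obtain ⟨x0, hx0slope, hx0mem⟩ := (hev'.and self_mem_nhdsWithin).exists
  have hx0pos : 0 < x0 := hx0mem
  have hx0gt : x0 < N * P x0 := by
    have := hx0slope
    rw [slope_def_field, hP0, sub_zero, sub_zero, div_eq_inv_mul] at this
    have h2 : x0 * 1 < x0 * (N * (x0⁻¹ * P x0)) := by
      exact (mul_lt_mul_iff_right₀ hx0pos).mpr this
    rw [mul_one] at h2
    calc x0 < x0 * (N * (x0⁻¹ * P x0)) := h2
      _ = N * P x0 := by field_simp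
  -- x0 < N + 1
  have hx0lt : x0 < N + 1 := by
    have hP1 := (hrange x0 hx0pos.le).2
    nlinarith
  -- f(N+1) ≤ 0 < f(x0) where f n = N * P n - n
  set f : ℝ → ℝ := fun n => N * P n - n with hf
  have hfc : ContinuousOn f (Set.Icc x0 (N+1)) :=
    (((continuous_const.mul hdiff.continuous).sub continuous_id).continuousOn)
  have hfN : f (N+1) < 0 := by
    have := (hrange (N+1) (by linarith)).2
    simp only [hf]; nlinarith
  have hfx0 : 0 < f x0 := by simp only [hf]; linarith
  have hIVT := intermediate_value_Icc' hx0lt.le hfc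
  have h0mem : (0:ℝ) ∈ Set.Icc (f (N+1)) (f x0) := ⟨hfN.le, hfx0.le⟩
  obtain ⟨n, hnmem, hn0⟩ := hIVT h0mem
  have hnpos : 0 < n := lt_of_lt_of_le hx0pos hnmem.1
  have hneq : N * P n = n := by
    have : N * P n - n = 0 := hn0
    linarith
  -- Uniqueness
  refine ⟨n, ⟨hnpos, hneq⟩, ?_⟩
  rintro m ⟨hmpos, hmeq⟩
  by_contra hne
  -- WLOG argument: for 0 < a < b both roots, contradiction
  have key : ∀ a b : ℝ, 0 < a → a < b → N * P a = a → N * P b = b → False := by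
    intro a b ha hab hea heb
    have hb : 0 < b := lt_trans ha hab
    have ht : (0:ℝ) < a / b := div_pos ha hb
    have ht1 : a / b < 1 := (div_lt_one hb).mpr hab
    have hcc := hconc.2 (x := b) (y := (0:ℝ)) (Set.mem_Ici.mpr hb.le)
      (Set.mem_Ici.mpr le_rfl) (ne_of_gt hb) ht (by linarith : (0:ℝ) < 1 - a/b)
      (by ring)
    simp only [smul_eq_mul, hP0, mul_zero, add_zero] at hcc
    rw [div_mul_cancel₀ a (ne_of_gt hb)] at hcc
    -- hcc : a/b * P b < P a
    have : a / b * (N * P b) < N * P a := by nlinarith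
    rw [hea, heb] at this
    have : a / b * b < a := this
    rw [div_mul_cancel₀ a (ne_of_gt hb)] at this
    exact lt_irrefl a this
  rcases lt_or_gt_of_ne hne with h | h
  · exact absurd (key m n hmpos h hmeq hneq) id
  · exact absurd (key n m hnpos h hneq hmeq) id
end

section
/- Equilibrium club size is monotone in the overlap: in the single-peer-type model with P(n) = 1 - exp(-ρ·n·k̄·α) where α = Σ_s g(s)h(s) > 0, if N·ρ·k̄·α > 1 then the unique positive fixed point n*(α) of N·P(n) = n is strictly increasing in α. -/
/-- Equilibrium club size is monotone in the overlap: with P_α(n) = 1 - exp(-ρ·n·k̄·α),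
if both overlaps give viable clubs and n₁, n₂ are the corresponding positive fixed points
of N·P_α(n) = n, then α₁ < α₂ implies n₁ < n₂. -/
theorem stmt_18 (N ρ k : ℝ) (hN : 0 < N) (hρ : 0 < ρ) (hk : 0 < k)
    (α₁ α₂ : ℝ) (hα₁ : α₁ ∈ Set.Ioc (0:ℝ) 1) (hα₂ : α₂ ∈ Set.Ioc (0:ℝ) 1)
    (hlt : α₁ < α₂)
    (hviab₁ : 1 < N * ρ * k * α₁)
    (n₁ n₂ : ℝ) (hn₁ : 0 < n₁) (hn₂ : 0 < n₂)
    (hfix₁ : N * (1 - Real.exp (-(ρ * n₁ * k * α₁))) = n₁)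
    (hfix₂ : N * (1 - Real.exp (-(ρ * n₂ * k * α₂))) = n₂) :
    n₁ < n₂ := by
  by_contra h
  push_neg at h
  have hα2pos : 0 < α₂ := hα₂.1
  have hα1pos : 0 < α₁ := hα₁.1
  have hy : (0:ℝ) < ρ * n₁ * k * α₂ := by positivity
  have hexp : Real.exp (-(ρ * n₁ * k * α₂)) < Real.exp (-(ρ * n₁ * k * α₁)) := by
    apply Real.exp_lt_exp.mpr
    nlinarith
  have hfn1 : n₁ < N * (1 - Real.exp (-(ρ * n₁ * k * α₂))) := by nlinarith
  rcases eq_or_lt_of_le h with heq | hlt'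
  · rw [heq] at hfix₂; linarith
  · set b := n₂ / n₁ with hb
    have hbpos : 0 < b := div_pos hn₂ hn₁
    have hb1 : b < 1 := (div_lt_one hn₁).mpr hlt'
    have key := strictConvexOn_exp.2 (Set.mem_univ (0:ℝ))
      (Set.mem_univ (-(ρ * n₁ * k * α₂))) (ne_of_gt (by linarith))
      (by linarith : (0:ℝ) < 1 - b) hbpos (by ring)
    simp only [smul_eq_mul, mul_zero, zero_add, Real.exp_zero, mul_one] at key
    have hbn : b * -(ρ * n₁ * k * α₂) = -(ρ * n₂ * k * α₂) := by
      field_simp [hb]; rw [hb, div_mul_cancel₀ n₂ hn₁.ne']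
    rw [hbn] at key
    have hbn1 : b * n₁ = n₂ := by field_simp [hb]; rw [hb, div_mul_cancel₀ n₂ hn₁.ne']
    nlinarith [mul_lt_mul_of_pos_left hfn1 hbpos,
      mul_lt_mul_of_pos_left key hN]
end
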